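/- Let 𝒳 be a metrizable locally convex TVS with a distance d as above (symmetric under negation, convex balls). For every nonempty compact symmetric K ⊆ 𝒳∖{0} and every r > 0, there exist a finite symmetric subset F of K and a continuous map (v,u) ↦ ϑ_v(u) from F × 𝒳 to [0,1] such that ϑ_v(u) = 0 whenever d(u,v) ≥ r, Σ_{v∈F} ϑ_v(u) = 1 for all u ∈ K, Σ_{v∈F} ϑ_v(u) ≤ 1 for all u ∈ 𝒳, and ϑ_{−v}(u) = ϑ_v(−u) for all v ∈ F, u ∈ 𝒳. -/

import Mathlib

open Filter Topology

theorem stmt10 {X : Type*} [AddCommGroup X] [Module ℝ X] [TopologicalSpace X]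
    [IsTopologicalAddGroup X] [ContinuousSMul ℝ X] [LocallyConvexSpace ℝ X]
    (d : X → X → ℝ)
    (hd0 : ∀ u v : X, 0 ≤ d u v)
    (hdeq : ∀ u v : X, d u v = 0 ↔ u = v)
    (hdsymm : ∀ u v : X, d u v = d v u)
    (hdtri : ∀ u v w : X, d u w ≤ d u v + d v w)
    (hdtop : ∀ u : X, (𝓝 u).HasBasis (fun r : ℝ => 0 < r) (fun r => {v : X | d v u < r}))
    (hdneg : ∀ u v : X, d (-u) (-v) = d u v)
    (hdconv : ∀ (u : X) (r : ℝ), Convex ℝ {v : X | d v u < r})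
    (K : Set X) (hKne : K.Nonempty) (hKc : IsCompact K) (hKsymm : K = -K)
    (hK0 : (0 : X) ∉ K) (r : ℝ) (hr : 0 < r) :
    ∃ F : Finset X, F.Nonempty ∧ (↑F : Set X) ⊆ K ∧ (∀ v ∈ F, -v ∈ F) ∧
      ∃ ϑ : X → X → ℝ,
        (∀ v ∈ F, Continuous (ϑ v)) ∧
        (∀ v ∈ F, ∀ u : X, 0 ≤ ϑ v u ∧ ϑ v u ≤ 1) ∧
        (∀ v ∈ F, ∀ u : X, r ≤ d u v → ϑ v u = 0) ∧
        (∀ u ∈ K, ∑ v ∈ F, ϑ v u = 1) ∧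
        (∀ u : X, ∑ v ∈ F, ϑ v u ≤ 1) ∧
        (∀ v ∈ F, ∀ u : X, ϑ (-v) u = ϑ v (-u)) := by
  classical
  -- continuity of u ↦ d u v
  have hdcont : ∀ v : X, Continuous fun u => d u v := by
    intro v
    rw [continuous_iff_continuousAt]
    intro u
    rw [ContinuousAt, Metric.tendsto_nhds]
    intro ε hε
    have hmem : {u' : X | d u' u < ε} ∈ 𝓝 u := (hdtop u).mem_of_mem hε
    filter_upwards [hmem] with u' hu'
    rw [Real.dist_eq, abs_sub_lt_iff]
    constructor
    · have := hdtri u' u v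
      linarith
    · have := hdtri u u' v
      have := hdsymm u u'
      linarith
  -- finite subcover
  have hhr : 0 < r / 2 := by linarith
  obtain ⟨t, htK, hcov⟩ := hKc.elim_nhds_subcover (fun v => {u : X | d u v < r / 2})
    (fun v _ => (hdtop v).mem_of_mem hhr)
  have hKneg : ∀ {v : X}, v ∈ K → -v ∈ K := by
    intro v hv
    rw [hKsymm]
    simpa using hv
  set F : Finset X := t ∪ t.image (fun v => -v) with hF
  have htF : t ⊆ F := Finset.subset_union_left
  have hFK : (↑F : Set X) ⊆ K := by
    intro v hv
    simp only [hF, Finset.coe_union, Set.mem_union, Finset.coe_image, Set.mem_image] at hv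
    rcases hv with hv | ⟨w, hw, rfl⟩
    · exact htK v hv
    · exact hKneg (htK w hw)
  have hFsymm : ∀ v ∈ F, -v ∈ F := by
    intro v hv
    simp only [hF, Finset.mem_union, Finset.mem_image] at hv ⊢
    rcases hv with hv | ⟨w, hw, rfl⟩
    · exact Or.inr ⟨v, hv, rfl⟩
    · simpa using Or.inl hw
  have hFne : F.Nonempty := by
    obtain ⟨u, hu⟩ := hKne
    have := hcov hu
    simp only [Set.mem_iUnion] at this
    obtain ⟨v, hv, _⟩ := this
    exact ⟨v, htF hv⟩
  -- tent functions
  set f : X → X → ℝ := fun v u => max (r - d u v) 0 with hf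
  have hfcont : ∀ v, Continuous (f v) :=
    fun v => (continuous_const.sub (hdcont v)).max continuous_const
  have hf0 : ∀ v u, 0 ≤ f v u := fun v u => le_max_right _ _
  set g : X → ℝ := fun u => max (∑ v ∈ F, f v u) (r / 2) with hg
  have hgcont : Continuous g :=
    (continuous_finset_sum F fun v _ => hfcont v).max continuous_const
  have hgpos : ∀ u, 0 < g u := fun u => lt_of_lt_of_le hhr (le_max_right _ _)
  have hsum_le_g : ∀ u, ∑ v ∈ F, f v u ≤ g u := fun u => le_max_left _ _
  have hf_le_sum : ∀ v ∈ F, ∀ u, f v u ≤ ∑ w ∈ F, f w u := by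
    intro v hv u
    exact Finset.single_le_sum (fun w _ => hf0 w u) hv
  -- on K the sum is large
  have hKsum : ∀ u ∈ K, r / 2 ≤ ∑ v ∈ F, f v u := by
    intro u hu
    have := hcov hu
    simp only [Set.mem_iUnion] at this
    obtain ⟨v, hv, hdv⟩ := this
    have h1 : r / 2 ≤ f v u := by
      simp only [hf, le_max_iff]
      left
      simp only [Set.mem_setOf_eq] at hdv
      linarith
    exact h1.trans (hf_le_sum v (htF hv) u)
  -- negation symmetry of f and g
  have hfneg : ∀ v u, f (-v) u = f v (-u) := by
    intro v u
    have : d u (-v) = d (-u) v := by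
      have := hdneg (-u) v
      simpa using this
    simp [hf, this]
  have hsumneg : ∀ u, ∑ v ∈ F, f v (-u) = ∑ v ∈ F, f v u := by
    intro u
    rw [show (∑ v ∈ F, f v u) = ∑ v ∈ F, f (-v) (-u) by
      refine Finset.sum_congr rfl fun v _ => ?_
      rw [hfneg]; simp]
    exact (Finset.sum_nbij' (fun v => -v) (fun v => -v)
      (fun v hv => hFsymm v hv) (fun v hv => hFsymm v hv)
      (fun v _ => by simp) (fun v _ => by simp)
      (fun v _ => rfl)).symm
  have hgneg : ∀ u, g (-u) = g u := fun u => by rw [hg]; simp only [hsumneg]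
  -- the partition
  refine ⟨F, hFne, hFK, hFsymm, fun v u => f v u / g u, ?_, ?_, ?_, ?_, ?_, ?_⟩
  · exact fun v _ => (hfcont v).div hgcont (fun u => (hgpos u).ne')
  · intro v hv u
    constructor
    · exact div_nonneg (hf0 v u) (hgpos u).le
    · rw [div_le_one (hgpos u)]
      exact (hf_le_sum v hv u).trans (hsum_le_g u)
  · intro v hv u hru
    have : f v u = 0 := by simp [hf]; linarith
    simp [this]
  · intro u hu
    rw [← Finset.sum_div]
    have : g u = ∑ v ∈ F, f v u := max_eq_left (hKsum u hu)
    rw [this, div_self]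
    exact ne_of_gt (lt_of_lt_of_le hhr (hKsum u hu))
  · intro u
    rw [← Finset.sum_div, div_le_one (hgpos u)]
    exact hsum_le_g u
  · intro v _ u
    show f (-v) u / g u = f v (-u) / g (-u)
    rw [hfneg, hgneg]
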